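/- Let P be a natural unit interval order on a finite subset of ℙ with incomparability graph G, let κ be a proper coloring of G, and let a be an integer. Then each connected component of the induced subgraph of G on the vertices colored a or a+1 is a path i_1 − i_2 − ⋯ − i_j with i_1 < i_2 < ⋯ < i_j. -/

import Mathlib

open List
open scoped Classical

noncomputable def upChain (A : ℕ → ℕ → Prop) : ℕ → ℕ → List ℕ
  | 0, x => [x]
  | (n+1), x => x :: (if h : ∃ y, A x y ∧ x < y then upChain A n h.choose else [])

lemma upChain_cons (A : ℕ → ℕ → Prop) (n x : ℕ) : ∃ t, upChain A n x = x :: t := by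
  cases n <;> exact ⟨_, rfl⟩

lemma upChain_mem_self (A : ℕ → ℕ → Prop) (n x : ℕ) : x ∈ upChain A n x := by
  obtain ⟨t, ht⟩ := upChain_cons A n x
  rw [ht]; exact List.mem_cons_self

lemma upChain_chain' (A : ℕ → ℕ → Prop) (n x : ℕ) :
    (upChain A n x).Chain' (fun p q => A p q ∧ p < q) := by
  induction n generalizing x with
  | zero => simp [upChain, List.Chain']
  | succ n ih =>
    rw [upChain]
    by_cases h : ∃ y, A x y ∧ x < y
    · rw [dif_pos h]
      refine List.isChain_cons.mpr ⟨?_, ih _⟩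
      intro y hy
      obtain ⟨t, ht⟩ := upChain_cons A n h.choose
      rw [ht] at hy
      simp at hy
      subst hy
      exact h.choose_spec
    · rw [dif_neg h]; simp [List.Chain']

lemma upChain_step_up (A : ℕ → ℕ → Prop)
    (hup : ∀ x y z, A x y → A x z → x < y → x < z → y = z) :
    ∀ n x, (upChain A n x).length ≤ n → ∀ z ∈ upChain A n x, ∀ y, A z y → z < y →
      [z, y] <:+: upChain A n x := by
  intro n
  induction n with
  | zero => intro x hlen; simp [upChain] at hlen
  | succ n ih =>
    intro x hlen z hz y hzy hlt
    by_cases h : ∃ y, A x y ∧ x < y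
    · rw [upChain, dif_pos h] at hz hlen ⊢
      rcases List.mem_cons.mp hz with rfl | hz'
      · have hy : y = h.choose := hup z y h.choose hzy h.choose_spec.1 hlt h.choose_spec.2
        subst hy
        obtain ⟨t, ht⟩ := upChain_cons A n h.choose
        rw [ht]
        exact List.IsPrefix.isInfix ⟨t, rfl⟩
      · have hlen' : (upChain A n h.choose).length ≤ n := by
          simpa using hlen
        exact (ih h.choose hlen' z hz' y hzy hlt).trans (List.suffix_cons x _).isInfix
    · rw [upChain, dif_neg h] at hz
      simp at hz
      subst hz
      exact absurd ⟨y, hzy, hlt⟩ h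

lemma upChain_step_down (A : ℕ → ℕ → Prop)
    (hdown : ∀ x y z, A x z → A y z → x < z → y < z → x = y) :
    ∀ n x, ∀ z ∈ upChain A n x, ∀ y, A y z → y < z →
      z = x ∨ [y, z] <:+: upChain A n x := by
  intro n
  induction n with
  | zero => intro x z hz y _ _; simp [upChain] at hz; exact Or.inl hz
  | succ n ih =>
    intro x z hz y hyz hlt
    by_cases h : ∃ y, A x y ∧ x < y
    · rw [upChain, dif_pos h] at hz ⊢
      rcases List.mem_cons.mp hz with rfl | hz'
      · exact Or.inl rfl
      · rcases ih h.choose z hz' y hyz hlt with hzc | hinf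
        · right
          have h1 : A x z := by rw [hzc]; exact h.choose_spec.1
          have h2 : x < z := by rw [hzc]; exact h.choose_spec.2
          have hx : y = x := hdown y x z hyz h1 hlt h2
          subst hx
          rw [← hzc]
          obtain ⟨t, ht⟩ := upChain_cons A n z
          rw [ht]
          exact List.IsPrefix.isInfix ⟨t, rfl⟩
        · exact Or.inr (hinf.trans (List.suffix_cons x _).isInfix)
    · rw [upChain, dif_neg h] at hz
      simp at hz
      exact Or.inl hz

lemma upChain_reach (A : ℕ → ℕ → Prop) :
    ∀ n x, ∀ z ∈ upChain A n x, Relation.ReflTransGen A x z := by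
  intro n
  induction n with
  | zero => intro x z hz; simp [upChain] at hz; subst hz; exact Relation.ReflTransGen.refl
  | succ n ih =>
    intro x z hz
    by_cases h : ∃ y, A x y ∧ x < y
    · rw [upChain, dif_pos h] at hz
      rcases List.mem_cons.mp hz with rfl | hz'
      · exact Relation.ReflTransGen.refl
      · exact Relation.ReflTransGen.head h.choose_spec.1 (ih h.choose z hz')
    · rw [upChain, dif_neg h] at hz
      simp at hz; subst hz; exact Relation.ReflTransGen.refl


/-- Let `P` be a natural unit interval order on a finite set `V` of positive integers
(strict order `ltP`, satisfying: `x <_P y → x < y`, and if `x <_P z` with `y` incomparable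
to both `x` and `z` then `x < y < z`), let `κ` be a proper coloring of its incomparability
graph, and let `a` be a color.  Then every connected component of the induced subgraph on
the vertices colored `a` or `a+1` is a path `i_1 − i_2 − ⋯ − i_j` with `i_1 < i_2 < ⋯ < i_j`:
there is a strictly increasing list `l` whose members are exactly the vertices of the
component, with edges exactly between consecutive members of `l`. -/
theorem component_is_increasing_path (V : Finset ℕ) (ltP : ℕ → ℕ → Prop)
    (hpos : ∀ v ∈ V, 0 < v)
    (hmem : ∀ x y, ltP x y → x ∈ V ∧ y ∈ V)
    (htrans : ∀ x y z, ltP x y → ltP y z → ltP x z)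
    (hnat : ∀ x y, ltP x y → x < y)
    (hnuio : ∀ x y z, x ∈ V → y ∈ V → z ∈ V → y ≠ x → y ≠ z → ltP x z →
      ¬ ltP x y → ¬ ltP y x → ¬ ltP y z → ¬ ltP z y → x < y ∧ y < z)
    (κ : ℕ → ℕ)
    (hproper : ∀ x ∈ V, ∀ y ∈ V, x ≠ y → ¬ ltP x y → ¬ ltP y x → κ x ≠ κ y)
    (a : ℕ) (v : ℕ) (hv : v ∈ V) (hva : κ v = a ∨ κ v = a + 1) :
    ∃ l : List ℕ, l.Chain' (· < ·) ∧
      (∀ x, x ∈ l ↔ (SimpleGraph.fromRel fun p q =>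
          p ∈ V ∧ q ∈ V ∧ ¬ ltP p q ∧ ¬ ltP q p ∧
          (κ p = a ∨ κ p = a + 1) ∧ (κ q = a ∨ κ q = a + 1)).Reachable v x) ∧
      (∀ x y, ((SimpleGraph.fromRel fun p q =>
          p ∈ V ∧ q ∈ V ∧ ¬ ltP p q ∧ ¬ ltP q p ∧
          (κ p = a ∨ κ p = a + 1) ∧ (κ q = a ∨ κ q = a + 1)).Adj x y ∧ x ∈ l)
        ↔ ([x, y] <:+: l ∨ [y, x] <:+: l)) := by
  classical
  set r : ℕ → ℕ → Prop := fun p q =>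
      p ∈ V ∧ q ∈ V ∧ ¬ ltP p q ∧ ¬ ltP q p ∧
      (κ p = a ∨ κ p = a + 1) ∧ (κ q = a ∨ κ q = a + 1) with hr
  set G := SimpleGraph.fromRel r with hG
  have hadj : ∀ x y, G.Adj x y ↔ x ≠ y ∧ r x y := by
    intro x y
    rw [hG, SimpleGraph.fromRel_adj]
    constructor
    · rintro ⟨hne, h | h⟩
      · exact ⟨hne, h⟩
      · exact ⟨hne, h.2.1, h.1, h.2.2.2.1, h.2.2.1, h.2.2.2.2.2, h.2.2.2.2.1⟩
    · rintro ⟨hne, h⟩; exact ⟨hne, Or.inl h⟩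
  have hkey : ∀ x y z, G.Adj x y → G.Adj x z → y ≠ z →
      (y < x ∧ x < z) ∨ (z < x ∧ x < y) := by
    intro x y z hxy hxz hyz
    obtain ⟨hnexy, hxV, hyV, hxy1, hyx1, hcx, hcy⟩ := (hadj x y).mp hxy
    obtain ⟨hnexz, -, hzV, hxz1, hzx1, -, hcz⟩ := (hadj x z).mp hxz
    have h1 : κ x ≠ κ y := hproper x hxV y hyV hnexy hxy1 hyx1
    have h2 : κ x ≠ κ z := hproper x hxV z hzV hnexz hxz1 hzx1
    have hcyz : κ y = κ z := by
      rcases hcx with h|h <;> rcases hcy with h'|h' <;> rcases hcz with h''|h'' <;> omega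
    have hcomp : ltP y z ∨ ltP z y := by
      by_contra hc
      push_neg at hc
      exact hproper y hyV z hzV hyz hc.1 hc.2 hcyz
    rcases hcomp with h|h
    · exact Or.inl (hnuio y x z hyV hxV hzV hnexy hnexz h hyx1 hxy1 hxz1 hzx1)
    · exact Or.inr (hnuio z x y hzV hxV hyV hnexz hnexy h hzx1 hxz1 hxy1 hyx1)
  have hup : ∀ x y z, G.Adj x y → G.Adj x z → x < y → x < z → y = z := by
    intro x y z h1 h2 l1 l2
    by_contra hne
    rcases hkey x y z h1 h2 hne with ⟨h,h2x⟩|⟨h,h2x⟩ <;> omega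
  have hdown : ∀ x y z, G.Adj x z → G.Adj y z → x < z → y < z → x = y := by
    intro x y z h1 h2 l1 l2
    by_contra hne
    rcases hkey z x y h1.symm h2.symm hne with ⟨h,h2x⟩|⟨h,h2x⟩ <;> omega
  have hadjV : ∀ {x y : ℕ}, G.Adj x y → y ∈ V := fun h => (((hadj _ _).mp h).2).2.1
  have hreachV : ∀ {x : ℕ}, G.Reachable v x → x ∈ V := by
    intro x hx
    rw [SimpleGraph.reachable_iff_reflTransGen] at hx
    rcases Relation.ReflTransGen.cases_tail hx with rfl | ⟨c, -, h⟩
    · exact hv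
    · exact hadjV h
  set C : Finset ℕ := V.filter (fun x => G.Reachable v x) with hC
  have hCmem : ∀ {x : ℕ}, x ∈ C ↔ G.Reachable v x := by
    intro x
    rw [hC, Finset.mem_filter]
    exact ⟨fun h => h.2, fun h => ⟨hreachV h, h⟩⟩
  have hvC : v ∈ C := hCmem.mpr (SimpleGraph.Reachable.refl v)
  set m : ℕ := C.min' ⟨v, hvC⟩ with hm
  have hmC : m ∈ C := Finset.min'_mem _ _
  have hvm : G.Reachable v m := hCmem.mp hmC
  have hCadj : ∀ {x y : ℕ}, x ∈ C → G.Adj x y → y ∈ C := fun hx h =>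
    hCmem.mpr ((hCmem.mp hx).trans h.reachable)
  have hmin : ∀ z ∈ C, m ≤ z := fun z hz => Finset.min'_le _ _ hz
  set l : List ℕ := upChain G.Adj C.card m with hl
  have hchain : l.Chain' (fun p q => G.Adj p q ∧ p < q) := upChain_chain' G.Adj C.card m
  have hlt : l.Chain' (· < ·) := List.IsChain.imp (fun a b h => h.2) hchain
  have hlC : ∀ z ∈ l, z ∈ C := by
    intro z hz
    have h := upChain_reach G.Adj C.card m z hz
    rw [← SimpleGraph.reachable_iff_reflTransGen] at h
    exact hCmem.mpr (hvm.trans h)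
  have hnodup : l.Nodup := (List.isChain_iff_pairwise.mp hlt).nodup
  have hlen : l.length ≤ C.card := by
    have hsub : l.toFinset ⊆ C := fun z hz => hlC z (List.mem_toFinset.mp hz)
    calc l.length = l.toFinset.card := (List.toFinset_card_of_nodup hnodup).symm
      _ ≤ C.card := Finset.card_le_card hsub
  have hstepup := upChain_step_up G.Adj hup C.card m hlen
  have hstepdown := upChain_step_down G.Adj hdown C.card m
  have hclosed : ∀ z, Relation.ReflTransGen G.Adj m z → z ∈ l := by
    intro z hz
    induction hz with
    | refl => exact upChain_mem_self _ _ _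
    | @tail b c hb hbc ih =>
      rcases Nat.lt_trichotomy b c with h | h | h
      · exact (hstepup b ih c hbc h).subset (by simp)
      · exact absurd h (G.ne_of_adj hbc)
      · rcases hstepdown b ih c hbc.symm h with rfl | hinf
        · have hcC : c ∈ C := hCadj hmC hbc
          exact absurd (hmin c hcC) (by omega)
        · exact hinf.subset (by simp)
  refine ⟨l, hlt, ?_, ?_⟩
  · intro x
    constructor
    · intro hx; exact hCmem.mp (hlC x hx)
    · intro hx
      refine hclosed x ?_
      rw [← SimpleGraph.reachable_iff_reflTransGen]
      exact hvm.symm.trans hx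
  · intro x y
    constructor
    · rintro ⟨hxy, hxl⟩
      rcases Nat.lt_trichotomy x y with h | h | h
      · exact Or.inl (hstepup x hxl y hxy h)
      · exact absurd h (G.ne_of_adj hxy)
      · rcases hstepdown x hxl y hxy.symm h with rfl | hinf
        · have hyC : y ∈ C := hCadj hmC hxy
          exact absurd (hmin y hyC) (by omega)
        · exact Or.inr hinf
    · rintro (hinf | hinf)
      · have hc := List.isChain_pair.mp (hchain.infix hinf)
        exact ⟨hc.1, hinf.subset (by simp)⟩
      · have hc := List.isChain_pair.mp (hchain.infix hinf)
        exact ⟨hc.1.symm, hinf.subset (by simp)⟩
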